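/- For natural numbers n ≥ 1 and 1 ≤ k ≤ n, define A_{n,k} = C(n+k-2, k-1) · (2n-k-1)!/(n-k)! · ∏_{j=0}^{n-2} (3j+1)!/(n+j)!. Then ∑_{k=1}^{n} A_{n,k} = ∏_{j=0}^{n-1} (3j+1)!/(n+j)!. -/

import Mathlib

open Finset

lemma hockey (r : ℕ) : ∀ m, ∑ i ∈ range (m+1), (r+i).choose i = (r+m+1).choose m := by
  intro m
  induction m with
  | zero => simp
  | succ m ih =>
    rw [sum_range_succ, ih, show r + (m+1) + 1 = (r+m+1)+1 from by ring,
      Nat.choose_succ_succ, show r + (m+1) = r+m+1 from by ring]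

lemma vdm (r s : ℕ) : ∀ m, ∑ i ∈ range (m+1),
    (r+i).choose i * (s + (m-i)).choose (m-i) = (r+s+m+1).choose m := by
  induction s with
  | zero =>
    intro m
    simp only [Nat.zero_add, Nat.choose_self, mul_one]
    simpa using hockey r m
  | succ s ih =>
    intro m
    induction m with
    | zero => simp
    | succ m ihm =>
      have key : ∀ i ∈ range (m+1),
          (r+i).choose i * (s+1 + (m+1-i)).choose (m+1-i)
          = (r+i).choose i * (s + (m+1-i)).choose (m+1-i)
            + (r+i).choose i * (s+1 + (m-i)).choose (m-i) := by
        intro i hi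
        have hi' : i ≤ m := Nat.lt_succ_iff.mp (mem_range.mp hi)
        have h1 : m+1-i = (m-i)+1 := by omega
        rw [h1, show s+1+((m-i)+1) = (s+1+(m-i))+1 from by ring,
          show s+((m-i)+1) = s+1+(m-i) from by ring, Nat.choose_succ_succ]
        simp only [Nat.succ_eq_add_one]
        ring
      rw [sum_range_succ, sum_congr rfl key, sum_add_distrib, ihm, Nat.sub_self]
      simp only [Nat.add_zero, Nat.choose_zero_right, mul_one]
      have hA := ih (m+1)
      rw [sum_range_succ, Nat.sub_self] at hA
      simp only [Nat.add_zero, Nat.choose_zero_right, mul_one] at hA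
      rw [show r+(s+1)+(m+1)+1 = (r+s+(m+1)+1)+1 from by ring, Nat.choose_succ_succ,
        show r+(s+1)+m+1 = r+s+(m+1)+1 from by ring]
      simp only [Nat.succ_eq_add_one]
      omega

theorem stmt13 (n : ℕ) (hn : 1 ≤ n) :
    ∑ k ∈ Finset.Icc 1 n,
      ((Nat.choose (n + k - 2) (k - 1) : ℚ) * (Nat.factorial (2 * n - k - 1) : ℚ)
          / (Nat.factorial (n - k) : ℚ)
        * ∏ j ∈ Finset.range (n - 1),
            (Nat.factorial (3 * j + 1) : ℚ) / (Nat.factorial (n + j) : ℚ))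
    = ∏ j ∈ Finset.range n,
        (Nat.factorial (3 * j + 1) : ℚ) / (Nat.factorial (n + j) : ℚ) := by
  obtain ⟨m, rfl⟩ : ∃ m, n = m + 1 := ⟨n - 1, by omega⟩
  have hfac : ∀ a : ℕ, (a.factorial : ℚ) ≠ 0 :=
    fun a => Nat.cast_ne_zero.mpr a.factorial_ne_zero
  have hsum : ∑ i ∈ range (m+1),
      ((m+i).choose i : ℚ) * ((2*m-i).factorial) / ((m-i).factorial)
      = ((3*m+1).factorial : ℚ) / ((2*m+1).factorial) := by
    have hterm : ∀ i ∈ range (m+1),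
        ((m+i).choose i : ℚ) * ((2*m-i).factorial) / ((m-i).factorial)
        = (m.factorial : ℚ) * (((m+i).choose i : ℚ) * ((m+(m-i)).choose (m-i) : ℚ)) := by
      intro i hi
      have hi' : i ≤ m := Nat.lt_succ_iff.mp (mem_range.mp hi)
      have h1 := Nat.choose_mul_factorial_mul_factorial (Nat.le_add_left (m-i) m)
      rw [show m+(m-i) - (m-i) = m from by omega] at h1
      rw [show 2*m - i = m + (m-i) from by omega]
      field_simp
      push_cast [← h1]
      ring
    rw [sum_congr rfl hterm, ← mul_sum]
    have hv := vdm m m m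
    rw [show m+m+m+1 = 3*m+1 from by ring] at hv
    have hv' : ∑ i ∈ range (m+1),
        (((m+i).choose i : ℚ) * ((m+(m-i)).choose (m-i) : ℚ)) = ((3*m+1).choose m : ℚ) := by
      exact_mod_cast hv
    rw [hv']
    have h2 := Nat.choose_mul_factorial_mul_factorial (show m ≤ 3*m+1 by omega)
    rw [show 3*m+1-m = 2*m+1 from by omega] at h2
    field_simp
    push_cast [← h2]
    ring
  rw [show Finset.Icc 1 (m+1) = Finset.Ico 1 (m+1+1) from (Finset.Ico_add_one_right_eq_Icc 1 (m+1)).symm,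
    Finset.sum_Ico_eq_sum_range]
  simp only [Nat.add_sub_cancel, show m+1+1-1 = m+1 from rfl]
  have hre : ∀ i ∈ range (m+1),
      ((Nat.choose (m+1 + (1+i) - 2) (1+i - 1) : ℚ)
          * (Nat.factorial (2 * (m+1) - (1+i) - 1) : ℚ)
          / (Nat.factorial (m+1 - (1+i)) : ℚ)
        * ∏ j ∈ Finset.range m,
            (Nat.factorial (3 * j + 1) : ℚ) / (Nat.factorial (m+1 + j) : ℚ))
      = ((m+i).choose i : ℚ) * ((2*m-i).factorial) / ((m-i).factorial)
        * ∏ j ∈ Finset.range m,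
            (Nat.factorial (3 * j + 1) : ℚ) / (Nat.factorial (m+1 + j) : ℚ) := by
    intro i hi
    have hi' : i ≤ m := Nat.lt_succ_iff.mp (mem_range.mp hi)
    rw [show m+1+(1+i)-2 = m+i from by omega, show 1+i-1 = i from by omega,
      show 2*(m+1)-(1+i)-1 = 2*m-i from by omega, show m+1-(1+i) = m-i from by omega]
  rw [sum_congr rfl hre, ← Finset.sum_mul, hsum, Finset.prod_range_succ,
    show m+1+m = 2*m+1 from by ring]
  ring
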